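/- Let n, k ∈ ℕ with 1 ≤ k ≤ n−1 and m : [n] → ℕ. Then Σ_{i=1}^{n} ( m_i + (n−k−1)·⌈m_i/k⌉ ) is the least value of the total Σ_{i=1}^{n} Σ_{j∈[n], j≠i} γ_{i,j} over all feasible families γ: some feasible γ attains this value, and every feasible γ has total at least this value. Equivalently, the minimum update bandwidth of (n,k,m) irregular array codes is γ_min = (1/n)·( Σ_{i=1}^n m_i + (n−k−1)·Σ_{i=1}^n ⌈m_i/k⌉ ). -/

import Mathlib

lemma ceil_mul_le (k mm : ℕ) (hk : 1 ≤ k) : mm ≤ k * ⌈(mm:ℚ)/k⌉₊ := by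
  have hk' : (0:ℚ) < k := by exact_mod_cast hk
  have h := Nat.le_ceil ((mm:ℚ)/k)
  rw [div_le_iff₀ hk'] at h
  rw [mul_comm]
  exact_mod_cast h

lemma mul_lt_of_lt_ceil (k mm x : ℕ) (hk : 1 ≤ k) (hx : x < ⌈(mm:ℚ)/k⌉₊) :
    k * x < mm := by
  have hk' : (0:ℚ) < k := by exact_mod_cast hk
  rw [Nat.lt_ceil, lt_div_iff₀ hk'] at hx
  have : (x:ℚ) * k = ((k * x : ℕ) : ℚ) := by push_cast; ring
  rw [this] at hx
  exact_mod_cast hx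

lemma ceil_div_eq (k mm : ℕ) (hk : 1 ≤ k) :
    ⌈(mm:ℚ)/k⌉₊ = if mm % k = 0 then mm / k else mm / k + 1 := by
  have hk' : (0:ℚ) < k := by exact_mod_cast hk
  have hmod := Nat.div_add_mod mm k
  split_ifs with h
  · have he : mm = k * (mm / k) := by omega
    apply le_antisymm
    · rw [Nat.ceil_le, div_le_iff₀ hk']
      exact_mod_cast (by rw [mul_comm]; omega : mm ≤ (mm/k) * k)
    · have := ceil_mul_le k mm hk
      have := Nat.le_of_mul_le_mul_left (le_of_eq_of_le he.symm this) hk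
      exact this
  · apply le_antisymm
    · rw [Nat.ceil_le, div_le_iff₀ hk']
      have : mm ≤ (mm/k + 1) * k := by
        have h2 : (mm/k + 1) * k = k * (mm/k) + k := by ring
        have : mm % k < k := Nat.mod_lt _ hk
        omega
      exact_mod_cast this
    · rw [Nat.add_one_le_iff, Nat.lt_ceil, lt_div_iff₀ hk']
      have : (mm/k) * k < mm := by
        have h2 : (mm/k) * k = k * (mm/k) := mul_comm _ _
        omega
      exact_mod_cast this

lemma row_lb {α : Type*} [DecidableEq α] (k mm : ℕ) (hk : 1 ≤ k)
    (T : Finset α) (f : α → ℕ) (hkT : k ≤ T.card)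
    (h : ∀ S ⊆ T, S.card = k → mm ≤ ∑ j ∈ S, f j) :
    mm + (T.card - k) * ⌈(mm:ℚ)/k⌉₊ ≤ ∑ j ∈ T, f j := by
  rcases Nat.eq_zero_or_pos mm with hm | hm
  · subst hm; simp
  set c := ⌈(mm:ℚ)/k⌉₊ with hc
  have hc1 : 0 < c := by
    rw [hc, Nat.ceil_pos]
    positivity
  have hne : (Finset.powersetCard k T).Nonempty := Finset.powersetCard_nonempty.mpr hkT
  obtain ⟨S, hSmem, hSmin⟩ :=
    Finset.exists_min_image (Finset.powersetCard k T) (fun S => ∑ j ∈ S, f j) hne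
  rw [Finset.mem_powersetCard] at hSmem
  obtain ⟨hST, hScard⟩ := hSmem
  have hS : mm ≤ ∑ j ∈ S, f j := h S hST hScard
  have hex : ∃ j' ∈ S, c ≤ f j' := by
    by_contra hno
    push_neg at hno
    have hle : ∑ j ∈ S, f j ≤ ∑ _j ∈ S, (c - 1) :=
      Finset.sum_le_sum fun j hj => by have := hno j hj; omega
    rw [Finset.sum_const, hScard, smul_eq_mul] at hle
    have := mul_lt_of_lt_ceil k mm (c-1) hk (by omega)
    omega
  obtain ⟨j', hj'S, hj'c⟩ := hex
  have hbig : ∀ j ∈ T \ S, c ≤ f j := by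
    intro j hj
    rw [Finset.mem_sdiff] at hj
    have hjS : j ∉ S.erase j' := fun hx => hj.2 (Finset.mem_of_mem_erase hx)
    have hswap : ∑ x ∈ S, f x ≤ ∑ x ∈ insert j (S.erase j'), f x := by
      apply hSmin
      rw [Finset.mem_powersetCard]
      refine ⟨fun x hx => ?_, ?_⟩
      · rcases Finset.mem_insert.mp hx with rfl | hx
        · exact hj.1
        · exact hST (Finset.mem_of_mem_erase hx)
      · rw [Finset.card_insert_of_notMem hjS, Finset.card_erase_of_mem hj'S, hScard]
        omega
    rw [Finset.sum_insert hjS] at hswap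
    have hsplit : ∑ x ∈ S, f x = f j' + ∑ x ∈ S.erase j', f x :=
      (Finset.add_sum_erase S f hj'S).symm
    have : f j' ≤ f j := by omega
    exact hj'c.trans this
  have h2 : (T.card - k) * c ≤ ∑ j ∈ T \ S, f j := by
    have hs : ∑ _j ∈ T \ S, c ≤ ∑ j ∈ T \ S, f j := Finset.sum_le_sum hbig
    rwa [Finset.sum_const, Finset.card_sdiff_of_subset hST, hScard, smul_eq_mul] at hs
  have hsd : ∑ j ∈ T \ S, f j + ∑ j ∈ S, f j = ∑ j ∈ T, f j := Finset.sum_sdiff hST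
  omega


/-- The minimum total update bandwidth of `(n,k,m)` irregular array codes:
`∑ i (m i + (n-k-1)·⌈m i / k⌉)` is the least value of `∑ i ∑_{j ≠ i} γ i j`
over all feasible families `γ`. -/
theorem stmt2 (n k : ℕ) (hk1 : 1 ≤ k) (hk2 : k ≤ n - 1) (m : Fin n → ℕ) :
    IsLeast {t : ℕ | ∃ γ : Fin n → Fin n → ℕ,
        (∀ E : Finset (Fin n), E.card = n - k →
          ∀ i ∈ E, m i ≤ ∑ j ∈ Eᶜ, γ i j) ∧
        t = ∑ i, ∑ j ∈ Finset.univ.erase i, γ i j}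
      (∑ i, (m i + (n - k - 1) * ⌈(m i : ℚ) / (k : ℚ)⌉₊)) := by
  have hn2 : 2 ≤ n := by omega
  have hcard_erase : ∀ i : Fin n, (Finset.univ.erase i).card = n - 1 := by
    intro i
    rw [Finset.card_erase_of_mem (Finset.mem_univ i), Finset.card_univ, Fintype.card_fin]
  constructor
  · -- construction
    choose B hB1 hB2 using fun i : Fin n =>
      Finset.exists_subset_card_eq (s := Finset.univ.erase i) (n := k - m i % k)
        (by rw [hcard_erase]; omega)
    refine ⟨fun i j => if j ∈ B i then m i / k else ⌈(m i : ℚ)/k⌉₊, ?_, ?_⟩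
    · -- feasibility
      intro E hE i hiE
      have hScard : Eᶜ.card = k := by
        rw [Finset.card_compl, hE, Fintype.card_fin]; omega
      have hiS : i ∉ Eᶜ := by simpa using hiE
      have hsum : ∑ j ∈ Eᶜ, (if j ∈ B i then m i / k else ⌈(m i : ℚ)/k⌉₊)
          = (Eᶜ ∩ B i).card * (m i / k) + (Eᶜ \ B i).card * ⌈(m i : ℚ)/k⌉₊ := by
        rw [Finset.sum_ite, Finset.sum_const, Finset.sum_const, smul_eq_mul, smul_eq_mul,
          Finset.filter_mem_eq_inter]
        congr 2
        rw [Finset.sdiff_eq_filter]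
      rw [hsum]
      set q := m i / k with hq
      set r := m i % k with hr
      have hmod : k * q + r = m i := Nat.div_add_mod (m i) k
      have hrk : r < k := Nat.mod_lt _ hk1
      have ha : (Eᶜ ∩ B i).card ≤ k - r :=
        le_trans (Finset.card_le_card Finset.inter_subset_right) (le_of_eq (hB2 i))
      have hab : (Eᶜ ∩ B i).card + (Eᶜ \ B i).card = k := by
        rw [Finset.card_inter_add_card_sdiff, hScard]
      set a := (Eᶜ ∩ B i).card
      set b := (Eᶜ \ B i).card
      rw [ceil_div_eq k (m i) hk1, ← hq, ← hr]
      split_ifs with h0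
      · have : a * q + b * q = (a+b) * q := by ring
        rw [this, hab]; omega
      · have : a * q + b * (q+1) = (a+b) * q + b := by ring
        rw [this, hab]; omega
    · -- total value
      symm
      refine Finset.sum_congr rfl fun i _ => ?_
      show ∑ j ∈ Finset.univ.erase i, (if j ∈ B i then m i / k else ⌈(m i : ℚ)/k⌉₊)
          = m i + (n - k - 1) * ⌈(m i : ℚ)/k⌉₊
      have hBmem : Finset.univ.erase i ∩ B i = B i := Finset.inter_eq_right.mpr (hB1 i)
      have hsum : ∑ j ∈ Finset.univ.erase i, (if j ∈ B i then m i / k else ⌈(m i : ℚ)/k⌉₊)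
          = (k - m i % k) * (m i / k) + (n - 1 - (k - m i % k)) * ⌈(m i : ℚ)/k⌉₊ := by
        rw [Finset.sum_ite, Finset.sum_const, Finset.sum_const, smul_eq_mul, smul_eq_mul,
          Finset.filter_mem_eq_inter, hBmem, hB2, ← Finset.sdiff_eq_filter,
          Finset.card_sdiff_of_subset (hB1 i), hcard_erase, hB2]
      rw [hsum]
      set q := m i / k with hq
      set r := m i % k with hr
      have hmod : k * q + r = m i := Nat.div_add_mod (m i) k
      have hrk : r < k := Nat.mod_lt _ hk1
      have hd : k - r + r = k := by omega
      have he : n - 1 - (k - r) = (n - k - 1) + r := by omega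
      rw [ceil_div_eq k (m i) hk1, ← hq, ← hr, he]
      split_ifs with h0
      · have h1 : r = 0 := h0
        calc (k - r) * q + (n - k - 1 + r) * q = ((k-r) + r) * q + (n-k-1) * q := by
              rw [h1]; ring
          _ = m i + (n-k-1) * q := by rw [hd]; omega
      · calc (k - r) * q + (n - k - 1 + r) * (q+1)
            = ((k-r) + r) * q + r + (n-k-1) * (q+1) := by ring
          _ = m i + (n-k-1) * (q+1) := by rw [hd]; omega
  · -- lower bound
    rintro t ⟨γ, hγ, rfl⟩
    apply Finset.sum_le_sum
    intro i _
    have hrow := row_lb k (m i) hk1 (Finset.univ.erase i) (γ i)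
      (by rw [hcard_erase]; omega)
      (by
        intro S hST hScard
        have hiS : i ∉ S := fun h => (Finset.mem_erase.mp (hST h)).1 rfl
        have hE : (Sᶜ).card = n - k := by
          rw [Finset.card_compl, hScard, Fintype.card_fin]
        have := hγ Sᶜ hE i (by simpa using hiS)
        rwa [compl_compl] at this)
    rw [hcard_erase] at hrow
    have : n - 1 - k = n - k - 1 := by omega
    rwa [this] at hrow
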